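/- Let ℓ ≥ 6 be an integer and let w be a subscript-increasing word on Σ₈. If φ(w) contains a 5/4-power of length 5ℓ (i.e., a factor x y x with |x| = ℓ and |y| = 3ℓ), then ℓ is divisible by 6. -/

import Mathlib

abbrev Sigma8 := ℤ × Fin 8

def phiAux (n : ℤ) : ℕ → List Sigma8
  | 0 => [(0,0),(1,1),(0,2),(0,3),(1,4),(n+3,5)]
  | 1 => [(1,6),(1,7),(0,0),(0,1),(0,2),(n+2,3)]
  | 2 => [(1,4),(1,5),(1,6),(0,7),(0,0),(n+3,1)]
  | 3 => [(0,2),(1,3),(1,4),(0,5),(1,6),(n+2,7)]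
  | 4 => [(0,0),(1,1),(0,2),(0,3),(1,4),(n+1,5)]
  | 5 => [(1,6),(1,7),(0,0),(0,1),(0,2),(n+2,3)]
  | 6 => [(1,4),(1,5),(1,6),(0,7),(0,0),(n+1,1)]
  | 7 => [(0,2),(1,3),(1,4),(0,5),(1,6),(n+2,7)]
  | _ => []

/-- The 6-uniform morphism φ on Σ₈, on a single letter. -/
def phi (a : Sigma8) : List Sigma8 := phiAux a.1 a.2.val

/-- φ extended to words by concatenation. -/
def phiW (w : List Sigma8) : List Sigma8 := w.flatMap phi

/-- A word on Σ₈ is subscript-increasing if subscripts increase by 1 mod 8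
from each letter to the next. -/
def SubIncr (w : List Sigma8) : Prop :=
  ∀ i : ℕ, (h : i + 1 < w.length) →
    (w.get ⟨i + 1, h⟩).2 = (w.get ⟨i, Nat.lt_of_succ_lt h⟩).2 + 1

/-- A 5/4-power: a word of the form x y x with x nonempty and |y| = 3|x|
(equivalently |xy| = 4|x|). -/
def IsPow54 {α : Type*} (w : List α) : Prop :=
  ∃ x y : List α, x ≠ [] ∧ y.length = 3 * x.length ∧ w = x ++ y ++ x

open Fin.NatCast Fin.CommRing

/-- The 0/1 bit at offset `r < 5` of a block of type `j` (mod 4). -/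
def bitF (j r : ℕ) : ℤ :=
  (([[0,1,0,0,1],[1,1,0,0,0],[1,1,1,0,0],[0,1,1,0,1]] : List (List ℤ)).getD (j % 4) []).getD r 0

lemma bitF_congr {j j' : ℕ} (r : ℕ) (h : j % 4 = j' % 4) : bitF j r = bitF j' r := by
  unfold bitF; rw [h]

lemma phi_length (a : Sigma8) : (phi a).length = 6 := by
  obtain ⟨n, j⟩ := a; fin_cases j <;> rfl

lemma phiW_length (w : List Sigma8) : (phiW w).length = 6 * w.length := by
  induction w with
  | nil => rfl
  | cons a w ih =>
    simp only [phiW, List.flatMap_cons, List.length_append, List.length_cons] at *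
    rw [phi_length, ih]; ring

lemma phiW_get? (w : List Sigma8) (m : ℕ) :
    (phiW w)[m]? = (w[m / 6]?).bind (fun a => (phi a)[m % 6]?) := by
  induction w generalizing m with
  | nil => simp [phiW]
  | cons a w ih =>
    have h : phiW (a :: w) = phi a ++ phiW w := by simp [phiW]
    rw [h]
    rcases Nat.lt_or_ge m 6 with hm | hm
    · rw [List.getElem?_append_left (by rw [phi_length]; exact hm)]
      have h1 : m / 6 = 0 := Nat.div_eq_of_lt hm
      have h2 : m % 6 = m := Nat.mod_eq_of_lt hm
      simp [h1, h2]
    · obtain ⟨k, rfl⟩ : ∃ k, m = 6 + k := ⟨m - 6, by omega⟩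
      rw [List.getElem?_append_right (by rw [phi_length]; omega)]
      rw [phi_length]
      have h1 : (6 + k) / 6 = k / 6 + 1 := by omega
      have h2 : (6 + k) % 6 = k % 6 := by omega
      have h3 : 6 + k - 6 = k := by omega
      rw [h1, h2, h3, ih k]
      simp

lemma phi_snd (n : ℤ) (j : Fin 8) (r : ℕ) (hr : r < 6) :
    (((phi (n,j))[r]?).map Prod.snd) = some (6 * j + (r : Fin 8)) := by
  fin_cases j <;> interval_cases r <;> simp [phi, phiAux]

lemma phi_fst (n : ℤ) (j : Fin 8) (r : ℕ) (hr : r < 5) :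
    (((phi (n,j))[r]?).map Prod.fst) = some (bitF j.val r) := by
  fin_cases j <;> interval_cases r <;> simp [phi, phiAux, bitF]

lemma keyQ : ∀ j0 < 8, ∀ a < 24, ∀ d < 17, (d = 8 ∨ d = 16) →
    ∃ i < 6, (a+i) % 6 ≠ 5 ∧ (a+i+d) % 6 ≠ 5 ∧
      bitF (j0 + (a+i)/6) ((a+i)%6) ≠ bitF (j0 + (a+i+d)/6) ((a+i+d)%6) := by
  intro j0 hj0
  interval_cases j0 <;> decide

lemma subIncr_get {w : List Sigma8} (hw : SubIncr w) (k : ℕ) (hk : k < w.length)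
    (h0 : 0 < w.length) : (w[k]).2 = (w[0]'h0).2 + (k : Fin 8) := by
  induction k with
  | zero => simp
  | succ k ih =>
    have hk' : k < w.length := by omega
    have := hw k (by omega)
    simp only [List.get_eq_getElem] at this
    rw [this, ih hk']
    push_cast
    ring

theorem stmt3 (ℓ : ℕ) (hℓ : 6 ≤ ℓ) (w : List Sigma8) (hw : SubIncr w)
    (x y : List Sigma8) (hx : x.length = ℓ) (hy : y.length = 3 * ℓ)
    (hfac : (x ++ y ++ x) <:+: phiW w) : 6 ∣ ℓ := by
  obtain ⟨s, t, hst⟩ := hfac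
  set p := s.length with hp
  -- total length
  have hlen : (phiW w).length = p + 4 * ℓ + ℓ + t.length := by
    rw [← hst]; simp [hx, hy]; omega
  have hLlen : (phiW w).length = 6 * w.length := phiW_length w
  have h0w : 0 < w.length := by omega
  set j0 : Fin 8 := (w[0]'h0w).2 with hj0
  -- the two occurrences of x
  have h1 : ∀ i, i < ℓ → (phiW w)[p + i]? = x[i]? := by
    intro i hi
    rw [← hst]
    rw [List.append_assoc]
    rw [List.getElem?_append_right (Nat.le_add_right _ _), Nat.add_sub_cancel_left]
    rw [List.getElem?_append_left (by simp [hx, hy]; omega)]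
    rw [List.getElem?_append_left (by simp [hx, hy]; omega)]
    rw [List.getElem?_append_left (by omega)]
  have h2 : ∀ i, i < ℓ → (phiW w)[p + 4 * ℓ + i]? = x[i]? := by
    intro i hi
    have hre : phiW w = (s ++ (x ++ y)) ++ (x ++ t) := by
      rw [← hst]; simp [List.append_assoc]
    rw [hre]
    have hl2 : (s ++ (x ++ y)).length = p + 4 * ℓ := by simp [hx, hy]; omega
    rw [List.getElem?_append_right (by omega), hl2, Nat.add_sub_cancel_left]
    rw [List.getElem?_append_left (by omega)]
  have heq : ∀ i, i < ℓ → (phiW w)[p + i]? = (phiW w)[p + 4 * ℓ + i]? := by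
    intro i hi; rw [h1 i hi, h2 i hi]
  -- description of letters of phiW w
  have hL2 : ∀ m, m < (phiW w).length →
      ((phiW w)[m]?).map Prod.snd = some (6 * j0 + (m : Fin 8)) := by
    intro m hm
    have hdiv : m / 6 < w.length := by omega
    rw [phiW_get?, List.getElem?_eq_getElem hdiv]
    simp only [Option.bind_some, Option.bind_some]
    have ha : w[m/6] = ((w[m/6]).1, (w[m/6]).2) := rfl
    rw [ha, phi_snd _ _ _ (Nat.mod_lt _ (by norm_num))]
    rw [subIncr_get hw _ hdiv h0w, ← hj0]
    congr 1
    have hm6 : ((m : ℕ) : Fin 8) = 6 * ((m / 6 : ℕ) : Fin 8) + ((m % 6 : ℕ) : Fin 8) := by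
      conv_lhs => rw [← Nat.div_add_mod m 6]
      push_cast
      ring
    rw [hm6]; ring
  have hL1 : ∀ m, m < (phiW w).length → m % 6 ≠ 5 →
      ((phiW w)[m]?).map Prod.fst = some (bitF (j0.val + m / 6) (m % 6)) := by
    intro m hm hm5
    have hdiv : m / 6 < w.length := by omega
    rw [phiW_get?, List.getElem?_eq_getElem hdiv]
    simp only [Option.bind_some, Option.bind_some]
    have ha : w[m/6] = ((w[m/6]).1, (w[m/6]).2) := rfl
    have hr5 : m % 6 < 5 := by omega
    rw [ha, phi_fst _ _ _ hr5]
    congr 1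
    apply bitF_congr
    rw [subIncr_get hw _ hdiv h0w, ← hj0]
    rw [Fin.val_add, Fin.val_natCast]
    omega
  -- Step A: 4ℓ ≡ 0 mod 8
  have hb1 : p < (phiW w).length := by omega
  have hb2 : p + 4 * ℓ < (phiW w).length := by omega
  have hsndEq : (6 * j0 + ((p : ℕ) : Fin 8)) = 6 * j0 + (((p + 4 * ℓ : ℕ)) : Fin 8) := by
    have e := congrArg (Option.map Prod.snd) (heq 0 (by omega))
    simp only [Nat.add_zero] at e
    rw [hL2 p hb1, hL2 (p + 4 * ℓ) hb2] at e
    exact Option.some.inj e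
  have h8 : (4 * ℓ) % 8 = 0 := by
    have e := add_left_cancel hsndEq
    have e' := congrArg Fin.val e
    rw [Fin.val_natCast, Fin.val_natCast] at e'
    omega
  -- Step B: 3 ∣ ℓ, via the locating property (finite check keyQ)
  have h3 : 3 ∣ ℓ := by
    by_contra h3
    have hd : (4 * ℓ) % 24 = 8 ∨ (4 * ℓ) % 24 = 16 := by omega
    obtain ⟨i, hi6, hns1, hns2, hbit⟩ :=
      keyQ j0.val j0.isLt (p % 24) (by omega) ((4 * ℓ) % 24) (by omega) hd
    have hiℓ : i < ℓ := by omega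
    have hbm1 : p + i < (phiW w).length := by omega
    have hbm2 : p + 4 * ℓ + i < (phiW w).length := by omega
    have e := congrArg (Option.map Prod.fst) (heq i hiℓ)
    rw [hL1 _ hbm1 (by omega), hL1 _ hbm2 (by omega)] at e
    have e' := Option.some.inj e
    apply hbit
    calc bitF (j0.val + (p % 24 + i) / 6) ((p % 24 + i) % 6)
        = bitF (j0.val + (p + i) / 6) ((p + i) % 6) := by
          rw [show (p % 24 + i) % 6 = (p + i) % 6 by omega]
          exact bitF_congr _ (by omega)
      _ = bitF (j0.val + (p + 4 * ℓ + i) / 6) ((p + 4 * ℓ + i) % 6) := e'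
      _ = bitF (j0.val + (p % 24 + i + (4 * ℓ) % 24) / 6)
            ((p % 24 + i + (4 * ℓ) % 24) % 6) := by
          rw [show (p + 4 * ℓ + i) % 6 = (p % 24 + i + (4 * ℓ) % 24) % 6 by omega]
          exact bitF_congr _ (by omega)
  omega
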